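/- arXiv:1707.04956 — 3 statements merged into one kernel-verified Lean document; each statement's English description precedes it below -/
import Mathlib

section
/- For every p > 0, τ > 0, ν ∈ ℝ, and t > 0, the sum G_{ν,p,τ}(t) = Σ_{n≥1} n^ν 2^{pn} e^{-2^{τn} t} satisfies H_{ν,p,τ}(t) ≤ G_{ν,p,τ}(t) ≲ t^{-p/τ} ℓ(t)^ν, where H_{ν,p,τ}(t) = sup_{n≥1} n^ν 2^{pn} e^{-2^{τn} t} and ℓ(t) = log(max(1/t, 2)). -/
open Real

/-- Tamed logarithm `ℓ(t) = log(1/t ∨ 2)`. -/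
noncomputable def tamedLog (t : ℝ) : ℝ := Real.log (max (1/t) 2)

open Finset Nat in
/-- `exp (-x) ≤ r! / x^r` for `x > 0`. -/
lemma exp_neg_le_factorial_div (r : ℕ) {x : ℝ} (hx : 0 < x) :
    Real.exp (-x) ≤ (r ! : ℝ) / x ^ r := by
  have hfac : (0:ℝ) < (r ! : ℝ) := by positivity
  have h1 : x ^ r / (r ! : ℝ) ≤ Real.exp x := by
    calc x ^ r / (r ! : ℝ) = ∑ i ∈ {r}, x ^ i / (i ! : ℝ) := by simp
    _ ≤ ∑ i ∈ range (r+1), x ^ i / (i ! : ℝ) := by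
        apply Finset.sum_le_sum_of_subset_of_nonneg
        · intro i hi; simp only [Finset.mem_singleton] at hi; simp [hi]
        · intro i _ _; positivity
    _ ≤ Real.exp x := Real.sum_le_exp_of_nonneg hx.le _
  have h2 : x ^ r ≤ (r ! : ℝ) * Real.exp x := by
    rw [div_le_iff₀ hfac] at h1; linarith
  rw [Real.exp_neg, le_div_iff₀ (by positivity), inv_mul_le_iff₀ (Real.exp_pos x)]
  calc x ^ r ≤ (r ! : ℝ) * Real.exp x := h2
  _ = Real.exp x * (r ! : ℝ) := by ring

/-- Geometric-type tail sums of `exp (-c * |n + 1 + A|)` are uniformly bounded. -/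
lemma sum_exp_abs_bound {c : ℝ} (hc : 0 < c) :
    ∃ S > (0:ℝ), ∀ A : ℝ,
      Summable (fun n : ℕ => Real.exp (-c * |(n:ℝ) + 1 + A|)) ∧
      (∑' n : ℕ, Real.exp (-c * |(n:ℝ) + 1 + A|))
        ≤ S := by
  set ρ : ℝ := Real.exp (-c) with hρdef
  have hρ0 : 0 < ρ := Real.exp_pos _
  have hρ1 : ρ < 1 := Real.exp_lt_one_iff.mpr (by linarith)
  have hρ1' : (0:ℝ) < (1 - ρ)⁻¹ := inv_pos.2 (by linarith)
  refine ⟨(1 + Real.exp (2*c)) * (1 - ρ)⁻¹,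
    mul_pos (by positivity) hρ1', fun A => ?_⟩
  set e : ℕ → ℝ := fun n => Real.exp (-c * |(n:ℝ) + 1 + A|) with hedef
  have he_nonneg : ∀ n, 0 ≤ e n := fun n => (Real.exp_pos _).le
  have key : ∀ (m : ℕ) (b : ℝ), b ≤ |((m:ℝ)) + 1 + A| → e m ≤ Real.exp (-c * b) := by
    intro m b hb
    exact Real.exp_le_exp.mpr (by nlinarith)
  -- summability
  have hsum : Summable e := by
    have hgs : Summable (fun n : ℕ => Real.exp (-c * (1 + A)) * ρ ^ n) :=
      (summable_geometric_of_lt_one hρ0.le hρ1).mul_left _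
    have hle : ∀ n : ℕ, e n ≤ Real.exp (-c * (1 + A)) * ρ ^ n := by
      intro n
      have : ((n:ℝ)) + 1 + A ≤ |(n:ℝ) + 1 + A| := le_abs_self _
      calc e n ≤ Real.exp (-c * ((n:ℝ) + 1 + A)) :=
            Real.exp_le_exp.mpr (by nlinarith)
      _ = Real.exp (-c * (1 + A)) * ρ ^ n := by
            rw [hρdef, ← Real.exp_nat_mul, ← Real.exp_add]; ring_nf
    exact Summable.of_nonneg_of_le he_nonneg hle hgs
  refine ⟨hsum, ?_⟩
  set M : ℕ := ⌈-A⌉₊ with hMdef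
  have hMA : -A - 1 ≤ (M:ℝ) := by
    rcases le_or_gt (-A) 0 with h | h
    · have : (0:ℝ) ≤ (M:ℝ) := Nat.cast_nonneg M
      linarith
    · have := Nat.le_ceil (-A); linarith
  -- split the sum at M
  rw [← Summable.sum_add_tsum_nat_add M hsum]
  have head : ∑ i ∈ Finset.range M, e i ≤ Real.exp (2*c) * (1 - ρ)⁻¹ := by
    have hMlt : ∀ i ∈ Finset.range M, e i ≤ Real.exp (2*c) * ρ ^ (M - i) := by
      intro i hi
      rw [Finset.mem_range] at hi
      -- since M = ⌈-A⌉₊ ≥ 1, we get (M:ℝ) - 1 < -A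
      have hM1 : (M:ℝ) - 1 < -A := by
        by_contra hcon
        push_neg at hcon
        have : M ≤ M - 1 := Nat.ceil_le.mpr (by
          push_cast [Nat.cast_sub (by omega : 1 ≤ M)]
          linarith)
        omega
      have habs : (M:ℝ) - i - 2 ≤ |(i:ℝ) + 1 + A| := by
        have : -((i:ℝ) + 1 + A) ≤ |(i:ℝ) + 1 + A| := neg_le_abs _
        linarith
      calc e i ≤ Real.exp (-c * ((M:ℝ) - i - 2)) := key i _ habs
      _ = Real.exp (2*c) * ρ ^ (M - i) := by
          rw [hρdef, ← Real.exp_nat_mul, ← Real.exp_add]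
          congr 1
          push_cast [Nat.cast_sub hi.le]
          ring
    calc ∑ i ∈ Finset.range M, e i ≤ ∑ i ∈ Finset.range M, Real.exp (2*c) * ρ ^ (M - i) :=
          Finset.sum_le_sum hMlt
    _ = Real.exp (2*c) * ∑ i ∈ Finset.range M, ρ ^ (M - i) := by rw [Finset.mul_sum]
    _ ≤ Real.exp (2*c) * (1 - ρ)⁻¹ := by
        apply mul_le_mul_of_nonneg_left _ (Real.exp_pos _).le
        have hre : ∑ i ∈ Finset.range M, ρ ^ (M - i) = ∑ j ∈ Finset.range M, ρ ^ (j+1) := by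
          rw [← Finset.sum_range_reflect]
          apply Finset.sum_congr rfl
          intro j hj
          rw [Finset.mem_range] at hj
          congr 1
          omega
        rw [hre]
        calc ∑ j ∈ Finset.range M, ρ ^ (j+1) ≤ ∑ j ∈ Finset.range M, ρ ^ j := by
              apply Finset.sum_le_sum
              intro j _
              exact pow_le_pow_of_le_one hρ0.le hρ1.le (by omega)
        _ ≤ (1 - ρ)⁻¹ := (Summable.sum_le_tsum _ (fun i _ => by positivity)
              (summable_geometric_of_lt_one hρ0.le hρ1)).trans
              (tsum_geometric_of_lt_one hρ0.le hρ1).le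
  have tail : (∑' i : ℕ, e (i + M)) ≤ (1 - ρ)⁻¹ := by
    have htl : ∀ i : ℕ, e (i + M) ≤ ρ ^ i := by
      intro i
      have habs : (i:ℝ) ≤ |((i + M :ℕ):ℝ) + 1 + A| := by
        have h1 : ((i + M:ℕ):ℝ) + 1 + A ≤ |((i + M:ℕ):ℝ) + 1 + A| := le_abs_self _
        push_cast at h1 ⊢
        linarith
      calc e (i + M) ≤ Real.exp (-c * i) := key _ _ habs
      _ = ρ ^ i := by rw [hρdef, ← Real.exp_nat_mul]; ring_nf
    calc (∑' i : ℕ, e (i + M)) ≤ ∑' i : ℕ, ρ ^ i :=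
          Summable.tsum_le_tsum htl ((summable_nat_add_iff M).2 hsum)
            (summable_geometric_of_lt_one hρ0.le hρ1)
    _ = (1 - ρ)⁻¹ := tsum_geometric_of_lt_one hρ0.le hρ1
  have : (0:ℝ) < (1 - ρ)⁻¹ := by positivity
  nlinarith [head, tail]

set_option maxHeartbeats 1000000 in
open Nat in
lemma perterm (p τ ν : ℝ) (hp : 0 < p) (hτ : 0 < τ) :
    ∃ D > (0:ℝ), ∃ c > (0:ℝ), ∀ t > (0:ℝ), ∀ n : ℕ, 1 ≤ n →
      (n : ℝ) ^ ν * (2:ℝ) ^ (p * (n:ℝ)) * Real.exp (-(2:ℝ) ^ (τ * (n:ℝ)) * t)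
        ≤ D * t ^ (-(p/τ)) * tamedLog t ^ ν *
            Real.exp (-c * |(n:ℝ) + Real.log t / (τ * Real.log 2)|) := by
  have hlog2 : (0:ℝ) < Real.log 2 := Real.log_pos one_lt_two
  set u : ℝ := τ * Real.log 2 with hudef
  have hu : 0 < u := by positivity
  set q : ℝ := p / τ with hqdef
  have hq : 0 < q := by positivity
  set r : ℕ := ⌈q⌉₊ + 1 with hrdef
  have hqr : q + 1 ≤ (r : ℝ) := by
    have := Nat.le_ceil q
    push_cast [hrdef]
    linarith
  have hrfac : (1:ℝ) ≤ (r ! : ℝ) := by exact_mod_cast Nat.one_le_iff_ne_zero.mpr (Nat.factorial_ne_zero r)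
  set c : ℝ := u * min 1 q / 2 with hcdef
  have hminq : 0 < min 1 q := lt_min one_pos hq
  have hc : 0 < c := by positivity
  set ε : ℝ := c / (|ν| + 1) with hεdef
  have hε : 0 < ε := by positivity
  set K : ℝ := (max 1 ε⁻¹) ^ |ν| with hKdef
  have hm1 : (1:ℝ) ≤ max 1 ε⁻¹ := le_max_left _ _
  have hK1 : 1 ≤ K := Real.one_le_rpow hm1 (abs_nonneg ν)
  have hK : 0 < K := lt_of_lt_of_le one_pos hK1
  set Cν : ℝ := (1+τ) ^ |ν| + (max 1 τ⁻¹) ^ |ν| with hCνdef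
  have hCν1 : (1+τ) ^ |ν| ≤ Cν := by
    have h0 : (0:ℝ) ≤ (max 1 τ⁻¹) ^ |ν| := Real.rpow_nonneg (by positivity) _
    rw [hCνdef]; linarith
  have hCν2 : (max 1 τ⁻¹) ^ |ν| ≤ Cν := by
    have h0 : (0:ℝ) ≤ (1+τ) ^ |ν| := Real.rpow_nonneg (by positivity) _
    rw [hCνdef]; linarith
  have hCν : 0 < Cν := by
    have h1 : (0:ℝ) < (1+τ) ^ |ν| := Real.rpow_pos_of_pos (by linarith) _
    have h2 : (0:ℝ) < (max 1 τ⁻¹) ^ |ν| := Real.rpow_pos_of_pos (by positivity) _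
    rw [hCνdef]; linarith
  have huν : (0:ℝ) < u ^ (-ν) := Real.rpow_pos_of_pos hu _
  refine ⟨Cν * u ^ (-ν) * (r ! : ℝ) * K, by positivity, c, hc, fun t ht n hn => ?_⟩
  set A : ℝ := Real.log t / u with hAdef
  set δ : ℝ := (n:ℝ) + A with hδdef
  set d : ℝ := |δ| with hddef
  have hd0 : 0 ≤ d := abs_nonneg _
  have hn1 : (1:ℝ) ≤ (n:ℝ) := by exact_mod_cast hn
  have hn0 : (0:ℝ) < (n:ℝ) := by linarith
  set X : ℝ := (2:ℝ) ^ (τ * (n:ℝ)) * t with hXdef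
  have hXpos : 0 < X := mul_pos (Real.rpow_pos_of_pos two_pos _) ht
  have hX : X = Real.exp (u * δ) := by
    have huδ : u * δ = Real.log 2 * (τ * (n:ℝ)) + Real.log t := by
      rw [hδdef, hAdef, hudef]
      field_simp
    rw [hXdef, Real.rpow_def_of_pos two_pos,
      show t = Real.exp (Real.log t) from (Real.exp_log ht).symm,
      ← Real.exp_add, huδ]
  -- the tamed log
  set L : ℝ := tamedLog t with hLdef
  have hLmax : L = max (-Real.log t) (Real.log 2) := by
    rw [hLdef, tamedLog]
    rcases le_total (1/t) 2 with h | h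
    · rw [max_eq_right h]
      have h2 : Real.log (1/t) ≤ Real.log 2 := Real.log_le_log (by positivity) h
      rw [one_div, Real.log_inv] at h2
      rw [max_eq_right h2]
    · rw [max_eq_left h]
      have h2 : Real.log 2 ≤ Real.log (1/t) := Real.log_le_log two_pos h
      rw [one_div, Real.log_inv] at h2
      rw [max_eq_left h2, one_div, Real.log_inv]
  have hL2 : Real.log 2 ≤ L := hLmax ▸ le_max_right _ _
  have hL : 0 < L := lt_of_lt_of_le hlog2 hL2
  set B : ℝ := L / u with hBdef
  have hB : B = max (-A) (1/τ) := by
    have e1 : -Real.log t / (τ * Real.log 2) = -A := by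
      rw [hAdef, hudef, neg_div]
    have e2 : Real.log 2 / (τ * Real.log 2) = 1/τ := by
      rw [mul_comm]
      rw [div_mul_eq_div_div]
      rw [div_self hlog2.ne']
    rw [hBdef, hLmax, hudef,
      ← max_div_div_right (by positivity : (0:ℝ) ≤ τ * Real.log 2), e1, e2]
  have hB0 : 0 < B := by
    rw [hB]
    exact lt_of_lt_of_le (by positivity) (le_max_right _ _)
  have hBτ : 1/τ ≤ B := hB ▸ le_max_right _ _
  have hBA : -A ≤ B := hB ▸ le_max_left _ _
  have hτB : 1 ≤ τ * B := by
    rw [mul_comm]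
    exact (div_le_iff₀ hτ).mp hBτ
  -- Step 0 : 2^(p n) = t^(-(p/τ)) * X^q
  have hstep0 : (2:ℝ) ^ (p * (n:ℝ)) = t ^ (-(p/τ)) * X ^ q := by
    rw [hX, Real.rpow_def_of_pos (Real.exp_pos _), Real.log_exp,
      Real.rpow_def_of_pos ht, Real.rpow_def_of_pos two_pos, ← Real.exp_add]
    congr 1
    rw [hδdef, hAdef, hudef, hqdef]
    field_simp
    ring
  -- Step 1 : X^q * exp (-X) ≤ r! * exp (-(2*c) * d)
  have hstep1 : X ^ q * Real.exp (-X) ≤ (r ! : ℝ) * Real.exp (-(2*c) * d) := by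
    have h2c : 2 * c = u * min 1 q := by rw [hcdef]; ring
    rcases le_or_gt 0 δ with hδ0 | hδ0
    · have hdδ : d = δ := abs_of_nonneg hδ0
      have h1 : Real.exp (-X) ≤ (r ! : ℝ) / X ^ r := exp_neg_le_factorial_div r hXpos
      have h2 : X ^ q * Real.exp (-X) ≤ (r ! : ℝ) * X ^ (q - (r:ℝ)) := by
        calc X ^ q * Real.exp (-X) ≤ X ^ q * ((r ! : ℝ) / X ^ r) := by
              apply mul_le_mul_of_nonneg_left h1 (Real.rpow_nonneg hXpos.le _)
        _ = (r ! : ℝ) * (X ^ q * (X ^ (r:ℝ))⁻¹) := by rw [Real.rpow_natCast]; ring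
        _ = (r ! : ℝ) * X ^ (q - (r:ℝ)) := by
              rw [← Real.rpow_neg hXpos.le, ← Real.rpow_add hXpos]; ring_nf
      refine h2.trans ?_
      apply mul_le_mul_of_nonneg_left _ (by positivity)
      rw [hX, Real.rpow_def_of_pos (Real.exp_pos _), Real.log_exp]
      apply Real.exp_le_exp.mpr
      rw [hdδ, h2c]
      have huδ0 : 0 ≤ u * δ := mul_nonneg hu.le hδ0
      have h3 : u * δ * (q - (r:ℝ)) ≤ u * δ * (-1) :=
        mul_le_mul_of_nonneg_left (by linarith) huδ0
      have hmin1 : min 1 q ≤ 1 := min_le_left _ _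
      have h4 : u * min 1 q * δ ≤ u * 1 * δ :=
        mul_le_mul_of_nonneg_right (mul_le_mul_of_nonneg_left hmin1 hu.le) hδ0
      linarith [h3, h4]
    · have hdδ : d = -δ := abs_of_neg hδ0
      have h1 : Real.exp (-X) ≤ 1 := Real.exp_le_one_iff.mpr (by linarith)
      have h2 : X ^ q ≤ Real.exp (-(2*c) * d) := by
        rw [hX, Real.rpow_def_of_pos (Real.exp_pos _), Real.log_exp]
        apply Real.exp_le_exp.mpr
        rw [hdδ, h2c]
        have hminq' : min 1 q ≤ q := min_le_right _ _
        have h5 : 0 ≤ u * (-δ) * (q - min 1 q) :=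
          mul_nonneg (mul_nonneg hu.le (by linarith)) (by linarith)
        linarith [h5]
      calc X ^ q * Real.exp (-X) ≤ X ^ q * 1 :=
            mul_le_mul_of_nonneg_left h1 (Real.rpow_nonneg hXpos.le _)
      _ = X ^ q := mul_one _
      _ ≤ Real.exp (-(2*c) * d) := h2
      _ ≤ (r ! : ℝ) * Real.exp (-(2*c) * d) :=
          le_mul_of_one_le_left (Real.exp_pos _).le hrfac
  -- Step 2 : (n:ℝ)^ν ≤ Cν * u^(-ν) * L^ν * (1+d)^|ν|
  have hBν : B ^ ν = L ^ ν * u ^ (-ν) := by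
    rw [hBdef, Real.div_rpow hL.le hu.le, Real.rpow_neg hu.le, div_eq_mul_inv]
  have hstep2 : (n:ℝ) ^ ν ≤ Cν * u ^ (-ν) * L ^ ν * (1+d) ^ |ν| := by
    have h1d : (0:ℝ) < 1 + d := by linarith
    rcases le_or_gt 0 ν with hν | hν
    · -- ν ≥ 0
      have habs : |ν| = ν := abs_of_nonneg hν
      have hnle : (n:ℝ) ≤ (1+τ) * ((1+d) * B) := by
        have h1 : (n:ℝ) ≤ d + B := by
          have : δ ≤ d := le_abs_self _
          rw [hδdef] at this
          linarith
        have h6 : d ≤ d * (τ * B) := le_mul_of_one_le_right hd0 hτB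
        have h7 : (0:ℝ) ≤ d * B := mul_nonneg hd0 hB0.le
        linarith [h1, h6, h7, hτB]
      calc (n:ℝ) ^ ν ≤ ((1+τ) * ((1+d) * B)) ^ ν :=
            Real.rpow_le_rpow hn0.le hnle hν
      _ = (1+τ) ^ ν * ((1+d) ^ ν * B ^ ν) := by
          rw [Real.mul_rpow (by linarith) (by positivity),
            Real.mul_rpow h1d.le hB0.le]
      _ ≤ Cν * ((1+d) ^ ν * B ^ ν) := by
          apply mul_le_mul_of_nonneg_right (habs ▸ hCν1)
          positivity
      _ = Cν * u ^ (-ν) * L ^ ν * (1+d) ^ |ν| := by rw [hBν, habs]; ring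
    · -- ν < 0
      have habs : |ν| = -ν := abs_of_neg hν
      set m : ℝ := max 1 τ⁻¹ with hmdef
      have hm1' : (1:ℝ) ≤ m := le_max_left _ _
      have hm0 : (0:ℝ) < m := by linarith
      have hBle : B ≤ m * ((n:ℝ) * (1+d)) := by
        rw [hB]
        apply max_le
        · have : -A ≤ (n:ℝ) + d := by
            have : -δ ≤ d := neg_le_abs _
            rw [hδdef] at this
            linarith
          have e1 : d ≤ (n:ℝ) * d := le_mul_of_one_le_left hd0 hn1
          have e2 : (n:ℝ) * (1+d) ≤ m * ((n:ℝ) * (1+d)) :=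
            le_mul_of_one_le_left (by positivity) hm1'
          linarith [e1, e2]
        · have h1 : 1/τ ≤ m := by
            rw [hmdef, one_div]
            exact le_max_right _ _
          have h8 : (n:ℝ) ≤ (n:ℝ) * (1+d) := le_mul_of_one_le_right hn0.le (by linarith)
          have h9 : m ≤ m * ((n:ℝ) * (1+d)) :=
            le_mul_of_one_le_right hm0.le (by linarith)
          linarith
      have hrle : (m * ((n:ℝ) * (1+d))) ^ ν ≤ B ^ ν :=
        Real.rpow_le_rpow_of_nonpos hB0 hBle hν.le
      have hexpand : (m * ((n:ℝ) * (1+d))) ^ ν = m ^ ν * ((n:ℝ) ^ ν * (1+d) ^ ν) := by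
        rw [Real.mul_rpow hm0.le (by positivity), Real.mul_rpow hn0.le h1d.le]
      have hid : (n:ℝ) ^ ν = (m * ((n:ℝ) * (1+d))) ^ ν * (m ^ (-ν) * (1+d) ^ (-ν)) := by
        rw [hexpand]
        rw [Real.rpow_neg hm0.le, Real.rpow_neg h1d.le]
        field_simp
      rw [hid]
      calc (m * ((n:ℝ) * (1+d))) ^ ν * (m ^ (-ν) * (1+d) ^ (-ν))
          ≤ B ^ ν * (m ^ (-ν) * (1+d) ^ (-ν)) := by
            apply mul_le_mul_of_nonneg_right hrle
            positivity
      _ ≤ B ^ ν * (Cν * (1+d) ^ (-ν)) := by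
            apply mul_le_mul_of_nonneg_left _ (Real.rpow_nonneg hB0.le _)
            apply mul_le_mul_of_nonneg_right (habs ▸ hCν2)
            positivity
      _ = Cν * u ^ (-ν) * L ^ ν * (1+d) ^ |ν| := by rw [hBν, habs]; ring
  -- Step 3 : (1+d)^|ν| * exp(-(2*c)*d) ≤ K * exp(-c*d)
  have hstep3 : (1+d) ^ |ν| * Real.exp (-(2*c)*d) ≤ K * Real.exp (-c*d) := by
    have h1d : (0:ℝ) < 1 + d := by linarith
    have hexp1 : 1 + ε * d ≤ Real.exp (ε * d) := by
      have := Real.add_one_le_exp (ε * d)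
      linarith
    have h1 : 1 + d ≤ (max 1 ε⁻¹) * Real.exp (ε * d) := by
      have hεd : 0 ≤ ε * d := by positivity
      rcases le_or_gt 1 ε with hε1 | hε1
      · have hd' : d ≤ ε * d := le_mul_of_one_le_left hd0 hε1
        calc 1 + d ≤ 1 + ε * d := by linarith
        _ ≤ Real.exp (ε * d) := hexp1
        _ ≤ (max 1 ε⁻¹) * Real.exp (ε * d) :=
            le_mul_of_one_le_left (Real.exp_pos _).le hm1
      · have hεinv : ε⁻¹ ≤ max 1 ε⁻¹ := le_max_right _ _
        have h2 : 1 + d ≤ ε⁻¹ * (1 + ε * d) := by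
          have hεi1 : 1 ≤ ε⁻¹ := one_le_inv_iff₀.mpr ⟨hε, hε1.le⟩
          have hid : ε⁻¹ * (1 + ε * d) = ε⁻¹ + d := by
            field_simp
          rw [hid]
          linarith
        calc 1 + d ≤ ε⁻¹ * (1 + ε * d) := h2
        _ ≤ ε⁻¹ * Real.exp (ε * d) := by
            apply mul_le_mul_of_nonneg_left hexp1 (by positivity)
        _ ≤ (max 1 ε⁻¹) * Real.exp (ε * d) :=
            mul_le_mul_of_nonneg_right hεinv (Real.exp_pos _).le
    have h2 : (1+d) ^ |ν| ≤ K * Real.exp (c * d) := by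
      calc (1+d) ^ |ν| ≤ ((max 1 ε⁻¹) * Real.exp (ε * d)) ^ |ν| :=
            Real.rpow_le_rpow h1d.le h1 (abs_nonneg ν)
      _ = K * (Real.exp (ε * d)) ^ |ν| := by
          rw [Real.mul_rpow (by positivity) (Real.exp_pos _).le, hKdef]
      _ = K * Real.exp (ε * d * |ν|) := by
          rw [Real.rpow_def_of_pos (Real.exp_pos _), Real.log_exp]
      _ ≤ K * Real.exp (c * d) := by
          apply mul_le_mul_of_nonneg_left _ hK.le
          apply Real.exp_le_exp.mpr
          have hεν : ε * (|ν| + 1) = c := by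
            rw [hεdef]
            field_simp
          have h7 : c * d = ε * |ν| * d + ε * d := by rw [← hεν]; ring
          have h8 : 0 ≤ ε * d := mul_nonneg hε.le hd0
          linarith [h7, h8]
    calc (1+d) ^ |ν| * Real.exp (-(2*c)*d)
        ≤ (K * Real.exp (c * d)) * Real.exp (-(2*c)*d) := by
          apply mul_le_mul_of_nonneg_right h2 (Real.exp_pos _).le
    _ = K * Real.exp (-c*d) := by
        rw [mul_assoc, ← Real.exp_add]
        congr 2
        ring
  -- Combine everything
  have hgoalL : (n : ℝ) ^ ν * (2:ℝ) ^ (p * (n:ℝ)) * Real.exp (-(2:ℝ) ^ (τ * (n:ℝ)) * t)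
      = t ^ (-(p/τ)) * ((n:ℝ) ^ ν * (X ^ q * Real.exp (-X))) := by
    rw [hstep0, hXdef]
    ring
  rw [hgoalL]
  have ha1 : (0:ℝ) ≤ (n:ℝ) ^ ν := Real.rpow_nonneg hn0.le _
  have ha2 : (0:ℝ) ≤ X ^ q * Real.exp (-X) := by positivity
  have hb1 : (0:ℝ) ≤ Cν * u ^ (-ν) * L ^ ν * (1+d) ^ |ν| := by positivity
  have hmul : (n:ℝ) ^ ν * (X ^ q * Real.exp (-X))
      ≤ (Cν * u ^ (-ν) * L ^ ν * (1+d) ^ |ν|) * ((r ! : ℝ) * Real.exp (-(2*c) * d)) :=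
    mul_le_mul hstep2 hstep1 ha2 hb1
  have hmul2 : (Cν * u ^ (-ν) * L ^ ν * (1+d) ^ |ν|) * ((r ! : ℝ) * Real.exp (-(2*c) * d))
      = (Cν * u ^ (-ν) * (r ! : ℝ) * L ^ ν) * ((1+d) ^ |ν| * Real.exp (-(2*c) * d)) := by
    ring
  have hmul3 : (n:ℝ) ^ ν * (X ^ q * Real.exp (-X))
      ≤ (Cν * u ^ (-ν) * (r ! : ℝ) * L ^ ν) * (K * Real.exp (-c*d)) := by
    rw [hmul2] at hmul
    refine hmul.trans ?_
    apply mul_le_mul_of_nonneg_left hstep3 (by positivity)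
  have htq : (0:ℝ) ≤ t ^ (-(p/τ)) := (Real.rpow_pos_of_pos ht _).le
  calc t ^ (-(p/τ)) * ((n:ℝ) ^ ν * (X ^ q * Real.exp (-X)))
      ≤ t ^ (-(p/τ)) * ((Cν * u ^ (-ν) * (r ! : ℝ) * L ^ ν) * (K * Real.exp (-c*d))) :=
        mul_le_mul_of_nonneg_left hmul3 htq
  _ = Cν * u ^ (-ν) * (r ! : ℝ) * K * t ^ (-(p/τ)) * L ^ ν * Real.exp (-c * d) := by
        ring

/-- For `p > 0`, `τ > 0`, `ν ∈ ℝ` and `t > 0`, with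
`G_{ν,p,τ}(t) = Σ_{n≥1} n^ν 2^{pn} e^{-2^{τn}t}` and
`H_{ν,p,τ}(t) = sup_{n≥1} n^ν 2^{pn} e^{-2^{τn}t}`, the series converges and
`H_{ν,p,τ}(t) ≤ G_{ν,p,τ}(t) ≤ C t^{-p/τ} ℓ(t)^ν`, with `C` independent of `t`. -/
theorem stmt9 (p τ ν : ℝ) (hp : 0 < p) (hτ : 0 < τ) :
    ∃ C > (0:ℝ), ∀ t > (0:ℝ),
      Summable (fun n : ℕ =>
        ((n+1 : ℕ) : ℝ) ^ ν * (2:ℝ) ^ (p * ((n:ℝ)+1)) *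
          Real.exp (-(2:ℝ) ^ (τ * ((n:ℝ)+1)) * t)) ∧
      (∀ n : ℕ, 1 ≤ n →
        (n : ℝ) ^ ν * (2:ℝ) ^ (p * (n:ℝ)) * Real.exp (-(2:ℝ) ^ (τ * (n:ℝ)) * t)
          ≤ ∑' n : ℕ, ((n+1 : ℕ) : ℝ) ^ ν * (2:ℝ) ^ (p * ((n:ℝ)+1)) *
              Real.exp (-(2:ℝ) ^ (τ * ((n:ℝ)+1)) * t)) ∧
      (∑' n : ℕ, ((n+1 : ℕ) : ℝ) ^ ν * (2:ℝ) ^ (p * ((n:ℝ)+1)) *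
          Real.exp (-(2:ℝ) ^ (τ * ((n:ℝ)+1)) * t))
        ≤ C * t ^ (-(p/τ)) * tamedLog t ^ ν := by
  obtain ⟨D, hD, c, hc, hDc⟩ := perterm p τ ν hp hτ
  obtain ⟨S, hS, hSbd⟩ := sum_exp_abs_bound hc
  refine ⟨D * S, by positivity, fun t ht => ?_⟩
  set f : ℕ → ℝ := fun n => ((n+1 : ℕ) : ℝ) ^ ν * (2:ℝ) ^ (p * ((n:ℝ)+1)) *
      Real.exp (-(2:ℝ) ^ (τ * ((n:ℝ)+1)) * t) with hfdef
  have hL : 0 < tamedLog t := by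
    have : (1:ℝ) < max (1/t) 2 := lt_of_lt_of_le one_lt_two (le_max_right _ _)
    exact Real.log_pos this
  have htq : 0 < t ^ (-(p/τ)) := Real.rpow_pos_of_pos ht _
  have hLν : 0 < tamedLog t ^ ν := Real.rpow_pos_of_pos hL _
  set A : ℝ := Real.log t / (τ * Real.log 2) with hAdef
  set g : ℕ → ℝ := fun n => (D * t ^ (-(p/τ)) * tamedLog t ^ ν) *
      Real.exp (-c * |(n:ℝ) + 1 + A|) with hgdef
  obtain ⟨hesum, hebd⟩ := hSbd A
  have hfg : ∀ n : ℕ, f n ≤ g n := by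
    intro n
    have h := hDc t ht (n+1) (by omega)
    simp only [hfdef, hgdef]
    push_cast at h ⊢
    convert h using 4 <;> ring
  have hf_nonneg : ∀ n, 0 ≤ f n := by
    intro n
    simp only [hfdef]
    have h1 : (0:ℝ) ≤ ((n+1 : ℕ) : ℝ) ^ ν := Real.rpow_nonneg (by positivity) _
    have h2 : (0:ℝ) ≤ (2:ℝ) ^ (p * ((n:ℝ)+1)) := (Real.rpow_pos_of_pos two_pos _).le
    positivity
  have hgsum : Summable g := hesum.mul_left _
  have hfsum : Summable f := Summable.of_nonneg_of_le hf_nonneg hfg hgsum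
  refine ⟨hfsum, ?_, ?_⟩
  · intro n hn
    obtain ⟨k, rfl⟩ : ∃ k, n = k + 1 := ⟨n - 1, by omega⟩
    have := Summable.le_tsum hfsum k (fun i _ => hf_nonneg i)
    calc ((k+1 : ℕ) : ℝ) ^ ν * (2:ℝ) ^ (p * ((k+1 : ℕ):ℝ)) *
          Real.exp (-(2:ℝ) ^ (τ * ((k+1:ℕ):ℝ)) * t) = f k := by
            simp only [hfdef]; push_cast; ring_nf
    _ ≤ ∑' n, f n := this
  · calc (∑' n, f n) ≤ ∑' n, g n := Summable.tsum_le_tsum hfg hfsum hgsum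
    _ = (D * t ^ (-(p/τ)) * tamedLog t ^ ν) * ∑' n : ℕ, Real.exp (-c * |(n:ℝ) + 1 + A|) :=
        tsum_mul_left
    _ ≤ (D * t ^ (-(p/τ)) * tamedLog t ^ ν) * S := by
        apply mul_le_mul_of_nonneg_left hebd (by positivity)
    _ = D * S * t ^ (-(p/τ)) * tamedLog t ^ ν := by ring
end

section
/- For p = 0, any ν ∈ ℝ, τ > 0, and t > 0, one has H_{ν,0,τ}(t) = sup_{n≥1} n^ν e^{-2^{τn} t} ≤ C ℓ(t)^{ν₊}, where ν₊ = max(ν,0) and ℓ(t) = log(max(1/t,2)). -/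
lemma tamedLog_ge (t : ℝ) : Real.log 2 ≤ tamedLog t :=
  Real.log_le_log two_pos (le_max_right _ _)

lemma tamedLog_pos (t : ℝ) : 0 < tamedLog t :=
  lt_of_lt_of_le (Real.log_pos one_lt_two) (tamedLog_ge t)

lemma exp_neg_tamedLog_le {t : ℝ} (ht : 0 < t) : Real.exp (-(tamedLog t)) ≤ t := by
  have hmax : (0:ℝ) < max (1/t) 2 := lt_max_of_lt_right two_pos
  have h1 : 1/t ≤ Real.exp (tamedLog t) := by
    rw [tamedLog, Real.exp_log hmax]; exact le_max_left _ _
  rw [Real.exp_neg]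
  rw [div_le_iff₀ ht] at h1
  rw [inv_le_iff_one_le_mul₀ (Real.exp_pos _)]
  linarith [mul_comm t (Real.exp (tamedLog t))]

set_option maxHeartbeats 1000000 in
/-- For `p = 0`, any `ν ∈ ℝ`, `τ > 0` and `t > 0`,
`H_{ν,0,τ}(t) = sup_{n≥1} n^ν e^{-2^{τn}t} ≤ C ℓ(t)^{ν₊}` with `C = C(ν,τ)`. -/
theorem stmt10 (τ ν : ℝ) (hτ : 0 < τ) :
    ∃ C > (0:ℝ), ∀ t > (0:ℝ), ∀ n : ℕ, 1 ≤ n →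
      (n : ℝ) ^ ν * Real.exp (-(2:ℝ) ^ (τ * (n:ℝ)) * t)
        ≤ C * tamedLog t ^ (max ν 0) := by
  have hlog2 : (0:ℝ) < Real.log 2 := Real.log_pos one_lt_two
  rcases le_or_gt ν 0 with hν | hν
  · refine ⟨1, one_pos, fun t ht n hn => ?_⟩
    rw [max_eq_right hν, Real.rpow_zero, mul_one]
    have hn1 : (1:ℝ) ≤ (n:ℝ) := by exact_mod_cast hn
    have h1 : (n:ℝ) ^ ν ≤ 1 := Real.rpow_le_one_of_one_le_of_nonpos hn1 hν
    have h2 : Real.exp (-(2:ℝ) ^ (τ * (n:ℝ)) * t) ≤ 1 := by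
      rw [Real.exp_le_one_iff]
      have := Real.rpow_pos_of_pos (two_pos) (τ * (n:ℝ))
      nlinarith
    have hp : (0:ℝ) ≤ (n:ℝ) ^ ν := (Real.rpow_pos_of_pos (by linarith) ν).le
    nlinarith
  · -- ν > 0
    obtain ⟨c, hc_def⟩ : ∃ c : ℝ, c = τ * Real.log 2 / 2 := ⟨_, rfl⟩
    have hc : 0 < c := by rw [hc_def]; positivity
    obtain ⟨a, ha_def⟩ : ∃ a : ℝ, a = 2 / (τ * Real.log 2) := ⟨_, rfl⟩
    have ha : 0 < a := by rw [ha_def]; positivity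
    obtain ⟨ε, hε_def⟩ : ∃ e : ℝ, e = c / (2 * ν) := ⟨_, rfl⟩
    have hε : 0 < ε := by rw [hε_def]; positivity
    obtain ⟨K, hK_def⟩ : ∃ K : ℝ, K = Real.exp (-(ν * (1 + Real.log ε))) := ⟨_, rfl⟩
    have hK : 0 < K := hK_def ▸ Real.exp_pos _
    refine ⟨a ^ ν + K / Real.log 2 ^ ν, by positivity, fun t ht n hn => ?_⟩
    rw [max_eq_left hν.le]
    obtain ⟨L, hL_def⟩ : ∃ L : ℝ, L = tamedLog t := ⟨_, rfl⟩
    rw [← hL_def]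
    have hLpos : 0 < L := hL_def ▸ tamedLog_pos t
    have hL2 : Real.log 2 ≤ L := hL_def ▸ tamedLog_ge t
    have hn1 : (1:ℝ) ≤ (n:ℝ) := by exact_mod_cast hn
    have hnpos : (0:ℝ) < n := by linarith
    have hLν : (0:ℝ) ≤ L ^ ν := (Real.rpow_pos_of_pos hLpos ν).le
    have hKd : (0:ℝ) ≤ K / Real.log 2 ^ ν := by positivity
    have haν : (0:ℝ) ≤ a ^ ν := (Real.rpow_pos_of_pos ha ν).le
    have hp : (0:ℝ) ≤ (n:ℝ) ^ ν := (Real.rpow_pos_of_pos hnpos ν).le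
    have hexp1 : Real.exp (-(2:ℝ) ^ (τ * (n:ℝ)) * t) ≤ 1 := by
      rw [Real.exp_le_one_iff]
      have := Real.rpow_pos_of_pos (two_pos) (τ * (n:ℝ))
      nlinarith
    rcases le_or_gt (n:ℝ) (a * L) with hcase | hcase
    · -- n ≤ a L
      have h1 : (n:ℝ) ^ ν ≤ (a * L) ^ ν :=
        Real.rpow_le_rpow hnpos.le hcase hν.le
      have h2 : (a * L) ^ ν = a ^ ν * L ^ ν := Real.mul_rpow ha.le hLpos.le
      calc (n:ℝ) ^ ν * Real.exp (-(2:ℝ) ^ (τ * (n:ℝ)) * t)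
          ≤ (n:ℝ) ^ ν * 1 := by nlinarith
        _ = (n:ℝ) ^ ν := mul_one _
        _ ≤ a ^ ν * L ^ ν := h2 ▸ h1
        _ ≤ (a ^ ν + K / Real.log 2 ^ ν) * L ^ ν := by nlinarith [mul_nonneg hKd hLν]
    · -- n > a L
      have hLn : L < c * n := by
        have hac : a * c = 1 := by
          rw [ha_def, hc_def]; field_simp
        nlinarith
      have key1 : c * n ≤ (2:ℝ) ^ (τ * (n:ℝ)) * t := by
        have h2exp : (2:ℝ) ^ (τ * (n:ℝ)) = Real.exp (Real.log 2 * (τ * n)) :=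
          Real.rpow_def_of_pos two_pos _
        have ht' : Real.exp (-L) ≤ t := hL_def ▸ exp_neg_tamedLog_le ht
        have hcn : c * n ≤ Real.exp (Real.log 2 * (τ * n) - L) := by
          have h1 : c * n + 1 ≤ Real.log 2 * (τ * n) - L + 1 := by
            have : Real.log 2 * (τ * n) = 2 * c * n := by rw [hc_def]; ring
            nlinarith
          have h2 := Real.add_one_le_exp (Real.log 2 * (τ * n) - L)
          linarith
        calc c * n ≤ Real.exp (Real.log 2 * (τ * n) - L) := hcn
          _ = Real.exp (Real.log 2 * (τ * n)) * Real.exp (-L) := by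
              rw [← Real.exp_add, sub_eq_add_neg]
          _ ≤ Real.exp (Real.log 2 * (τ * n)) * t :=
              mul_le_mul_of_nonneg_left ht' (Real.exp_pos _).le
          _ = (2:ℝ) ^ (τ * (n:ℝ)) * t := by rw [h2exp]
      have key2 : (n:ℝ) ^ ν ≤ Real.exp (c / 2 * n) * K := by
        have hlogn : Real.log n ≤ ε * n - 1 - Real.log ε := by
          have h1 : Real.log (ε * n) ≤ ε * n - 1 :=
            Real.log_le_sub_one_of_pos (by positivity)
          rw [Real.log_mul hε.ne' hnpos.ne'] at h1
          linarith
        rw [Real.rpow_def_of_pos hnpos, hK_def, ← Real.exp_add]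
        apply Real.exp_le_exp.mpr
        have h3 : ν * (ε * (n:ℝ)) = c / 2 * n := by
          rw [hε_def]; field_simp
        have h4 := mul_le_mul_of_nonneg_left hlogn hν.le
        have h5 : ν * (ε * (n:ℝ) - 1 - Real.log ε) = ν * (ε * (n:ℝ)) - ν * (1 + Real.log ε) := by
          ring
        have h6 : Real.log (n:ℝ) * ν = ν * Real.log (n:ℝ) := mul_comm _ _
        linarith
      have key3 : Real.exp (-(2:ℝ) ^ (τ * (n:ℝ)) * t) ≤ Real.exp (-(c * n)) := by
        apply Real.exp_le_exp.mpr; linarith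
      have hbound : (n:ℝ) ^ ν * Real.exp (-(2:ℝ) ^ (τ * (n:ℝ)) * t) ≤ K := by
        calc (n:ℝ) ^ ν * Real.exp (-(2:ℝ) ^ (τ * (n:ℝ)) * t)
            ≤ (Real.exp (c / 2 * n) * K) * Real.exp (-(c * n)) :=
              mul_le_mul key2 key3 (Real.exp_pos _).le (by positivity)
          _ = K * (Real.exp (c / 2 * n) * Real.exp (-(c * n))) := by ring
          _ = K * Real.exp (c / 2 * n + -(c * n)) := by rw [Real.exp_add]
          _ ≤ K * 1 := by
              refine mul_le_mul_of_nonneg_left ?_ hK.le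
              rw [Real.exp_le_one_iff]; nlinarith
          _ = K := mul_one K
      have hKL : K ≤ K / Real.log 2 ^ ν * L ^ ν := by
        have h1 : Real.log 2 ^ ν ≤ L ^ ν := Real.rpow_le_rpow hlog2.le hL2 hν.le
        have h2 : (0:ℝ) < Real.log 2 ^ ν := Real.rpow_pos_of_pos hlog2 ν
        rw [div_mul_eq_mul_div, le_div_iff₀ h2]
        exact mul_le_mul_of_nonneg_left h1 hK.le
      calc (n:ℝ) ^ ν * Real.exp (-(2:ℝ) ^ (τ * (n:ℝ)) * t)
          ≤ K := hbound
        _ ≤ K / Real.log 2 ^ ν * L ^ ν := hKL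
        _ ≤ (a ^ ν + K / Real.log 2 ^ ν) * L ^ ν := by nlinarith [mul_nonneg haν hLν]
end

section
/- Let (ξ_k)_{k≥1} be independent centered Gaussians with ξ_k ~ N(0, σ_k²), where σ_k ≤ k / (λ √(log k) (1 - e^{-εk²})) for some λ > √2 and ε > 0. Then almost surely only finitely many k satisfy ξ_k ≥ k/(1 - e^{-εk²}); consequently inf_{k≥1} τ_k > 0 a.s., where τ_k = -k^{-2}log(1 - k/ξ_k) (τ_k = ∞ when ξ_k ≤ k). -/
open MeasureTheory ProbabilityTheory Real Set
open scoped ENNReal NNReal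

lemma exp_int {b : ℝ} (hb : 0 < b) (a : ℝ) :
    ∫ x in Ioi a, Real.exp (-b * x) = Real.exp (-b * a) / b := by
  have h : ∀ x ∈ Ioi a, HasDerivAt (fun y => -Real.exp (-b * y) / b) (Real.exp (-b * x)) x := by
    intro x _
    have h1 : HasDerivAt (fun y : ℝ => Real.exp (-b * y)) (Real.exp (-b * x) * (-b)) x :=
      by simpa using HasDerivAt.exp ((hasDerivAt_id x).const_mul (-b))
    have h2 := (h1.neg).div_const b
    refine h2.congr_deriv ?_
    rw [mul_neg, neg_neg, mul_div_assoc, div_self hb.ne', mul_one]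
  have hint : IntegrableOn (fun x => Real.exp (-b * x)) (Ioi a) :=
    exp_neg_integrableOn_Ioi a hb
  have htend : Filter.Tendsto (fun y => -Real.exp (-b * y) / b) Filter.atTop (nhds 0) := by
    have h3 : Filter.Tendsto (fun y : ℝ => -b * y) Filter.atTop Filter.atBot :=
      Filter.tendsto_id.const_mul_atTop_of_neg (by linarith)
    have h4 := (Real.tendsto_exp_atBot.comp h3).neg.div_const b
    simpa using h4
  have hcont : ContinuousWithinAt (fun y => -Real.exp (-b * y) / b) (Ici a) a := by
    apply Continuous.continuousWithinAt; continuity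
  have := MeasureTheory.integral_Ioi_of_hasDerivAt_of_tendsto hcont h hint htend
  rw [this]; field_simp; ring

open scoped ENNReal NNReal in
lemma gauss_tail {v : ℝ≥0} (hv : v ≠ 0) {a : ℝ} (ha : 0 < a) (hav : Real.sqrt v ≤ a) :
    gaussianReal 0 v {x | a ≤ x} ≤ ENNReal.ofReal (Real.exp (-(a^2) / (2*v))) := by
  have hv0 : (0:ℝ) < v := by positivity
  have hset : {x : ℝ | a ≤ x} = Ici a := rfl
  rw [hset, gaussianReal_apply_eq_integral 0 hv]
  apply ENNReal.ofReal_le_ofReal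
  rw [MeasureTheory.integral_Ici_eq_integral_Ioi]
  set C : ℝ := (Real.sqrt (2 * π * v))⁻¹ * Real.exp (a^2 / (2*v)) with hC
  have hb : (0:ℝ) < a / v := by positivity
  have hmono : ∀ x ∈ Ioi a, gaussianPDFReal 0 v x ≤ C * Real.exp (-(a/v) * x) := by
    intro x _
    have key : Real.exp (-x^2 / (2*(v:ℝ))) ≤ Real.exp (a^2/(2*(v:ℝ))) * Real.exp (-(a/(v:ℝ))*x) := by
      rw [← Real.exp_add, Real.exp_le_exp, ← sub_nonneg]
      have h := sq_nonneg (x - a)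
      have h4 : a^2/(2*(v:ℝ)) + -(a/(v:ℝ))*x - -x^2 / (2*(v:ℝ)) = (x-a)^2 / (2*(v:ℝ)) := by
        field_simp; ring
      rw [h4]; positivity
    calc gaussianPDFReal 0 v x = (Real.sqrt (2*π*(v:ℝ)))⁻¹ * Real.exp (-x^2/(2*(v:ℝ))) := by
          rw [gaussianPDFReal_def]; norm_num
      _ ≤ (Real.sqrt (2*π*(v:ℝ)))⁻¹ * (Real.exp (a^2/(2*(v:ℝ))) * Real.exp (-(a/(v:ℝ))*x)) := by
          apply mul_le_mul_of_nonneg_left key (by positivity)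
      _ = C * Real.exp (-(a/(v:ℝ))*x) := by rw [hC]; ring
  have hInt := MeasureTheory.setIntegral_mono_on
    ((integrable_gaussianPDFReal 0 v).integrableOn)
    ((exp_neg_integrableOn_Ioi a hb).const_mul C) measurableSet_Ioi hmono
  refine hInt.trans ?_
  rw [MeasureTheory.integral_const_mul, exp_int hb a]
  have hexp : Real.exp (a^2/(2*(v:ℝ))) * (Real.exp (-(a/(v:ℝ)) * a) / (a/(v:ℝ)))
      = ((v:ℝ)/a) * Real.exp (-(a^2) / (2*(v:ℝ))) := by
    have h5 : a^2/(2*(v:ℝ)) + (-(a/(v:ℝ)) * a) = -a^2/(2*(v:ℝ)) := by field_simp; ring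
    rw [mul_div_assoc', ← Real.exp_add, h5, div_div_eq_mul_div]
    ring
  rw [hC, mul_assoc, hexp]
  have hfac : (Real.sqrt (2*π*(v:ℝ)))⁻¹ * ((v:ℝ)/a) ≤ 1 := by
    rw [inv_mul_le_iff₀ (by positivity), mul_one, div_le_iff₀ ha]
    have h1 : Real.sqrt (v:ℝ) * Real.sqrt (v:ℝ) = (v:ℝ) :=
      Real.mul_self_sqrt (le_of_lt hv0)
    have h2 : Real.sqrt (v:ℝ) ≤ Real.sqrt (2*π*(v:ℝ)) := by
      apply Real.sqrt_le_sqrt; nlinarith [Real.pi_gt_three]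
    nlinarith [Real.sqrt_nonneg (v:ℝ), Real.sqrt_pos.mpr hv0]
  calc (Real.sqrt (2*π*(v:ℝ)))⁻¹ * (((v:ℝ)/a) * Real.exp (-(a^2) / (2*(v:ℝ))))
      = ((Real.sqrt (2*π*(v:ℝ)))⁻¹ * ((v:ℝ)/a)) * Real.exp (-(a^2) / (2*(v:ℝ))) := by ring
    _ ≤ 1 * Real.exp (-(a^2) / (2*(v:ℝ))) := by
        apply mul_le_mul_of_nonneg_right hfac (Real.exp_nonneg _)
    _ = Real.exp (-(a^2) / (2*(v:ℝ))) := one_mul _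

/-- Blow-up time `τ_k` of the `k`-th Fourier mode: `τ_k = -k^{-2} log(1 - k/ξ_k)` when
`ξ_k > k`, and `τ_k = ∞` when `ξ_k ≤ k`. -/
noncomputable def blowupTime (k : ℕ) (x : ℝ) : ℝ≥0∞ :=
  if x ≤ k then ⊤ else ENNReal.ofReal (-(1/(k:ℝ)^2) * Real.log (1 - k / x))

/-- Let `(ξ_k)` be independent centered Gaussians, `ξ_k ~ N(0,σ_k²)` with
`σ_k ≤ k/(λ √(log k) (1 - e^{-εk²}))` for some `λ > √2`, `ε > 0`. Then a.s. only finitely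
many `k` satisfy `ξ_k ≥ k/(1-e^{-εk²})`, and consequently `inf_{k≥1} τ_k > 0` a.s. -/
theorem stmt14 {Ω : Type*} [MeasurableSpace Ω] (P : Measure Ω) [IsProbabilityMeasure P]
    (ξ : ℕ → Ω → ℝ) (σ : ℕ → ℝ≥0) (lam ε : ℝ)
    (hlam : Real.sqrt 2 < lam) (hε : 0 < ε)
    (hmeas : ∀ k, Measurable (ξ k))
    (hindep : iIndepFun ξ P)
    (hlaw : ∀ k, P.map (ξ k) = gaussianReal 0 (σ k ^ 2))
    (hσ : ∀ k : ℕ, 2 ≤ k →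
      (σ k : ℝ) ≤ k / (lam * Real.sqrt (Real.log k) * (1 - Real.exp (-ε * k^2)))) :
    ∀ᵐ ω ∂P,
      {k : ℕ | 1 ≤ k ∧ (k : ℝ) / (1 - Real.exp (-ε * k^2)) ≤ ξ k ω}.Finite ∧
      0 < ⨅ (k : ℕ) (_ : 1 ≤ k), blowupTime k (ξ k ω) := by
  have hlam0 : 0 < lam := lt_trans (Real.sqrt_pos.mpr two_pos) hlam
  have hlam2 : 2 < lam ^ 2 := by
    have := (Real.sqrt_lt' hlam0).mp hlam
    linarith
  set A : ℕ → ℝ := fun k => (k : ℝ) / (1 - Real.exp (-ε * k^2)) with hA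
  set s : ℕ → Set Ω := fun k => {ω | A k ≤ ξ k ω} with hs
  -- basic facts
  have hD : ∀ k : ℕ, 1 ≤ k → 0 < 1 - Real.exp (-ε * k^2) := by
    intro k hk
    have hk0 : (0:ℝ) < (k:ℝ) := by exact_mod_cast hk
    have : Real.exp (-ε * k^2) < 1 := by
      rw [Real.exp_lt_one_iff]
      have : (0:ℝ) < ε * (k:ℝ)^2 := by positivity
      linarith
    linarith
  have hD1 : ∀ k : ℕ, 1 - Real.exp (-ε * k^2) < 1 := by
    intro k; have := Real.exp_pos (-ε * k^2); linarith
  have hApos : ∀ k : ℕ, 1 ≤ k → 0 < A k := by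
    intro k hk
    have hk0 : (0:ℝ) < (k:ℝ) := by exact_mod_cast hk
    exact div_pos hk0 (hD k hk)
  have hL : ∀ k : ℕ, 2 ≤ k → 1 ≤ lam * Real.sqrt (Real.log k) := by
    intro k hk
    have h2 : (2:ℝ) ≤ (k:ℝ) := by exact_mod_cast hk
    have hlog2 : (0.6931471803:ℝ) < Real.log 2 := Real.log_two_gt_d9
    have hlogk : Real.log 2 ≤ Real.log k := Real.log_le_log (by norm_num) h2
    have hlogk0 : (0:ℝ) < Real.log k := by linarith
    have hsq : Real.sqrt (Real.log k) * Real.sqrt (Real.log k) = Real.log k :=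
      Real.mul_self_sqrt hlogk0.le
    nlinarith [Real.sqrt_nonneg (Real.log k), Real.sq_sqrt (le_of_lt hlogk0),
      Real.sqrt_le_sqrt hlogk]
  -- tail probability bound
  have hsmeas : ∀ k, MeasurableSet (s k) := fun k => (hmeas k) measurableSet_Ici
  have hPs : ∀ k, P (s k) = gaussianReal 0 (σ k ^ 2) {x | A k ≤ x} := by
    intro k
    rw [← hlaw k, show {x : ℝ | A k ≤ x} = Ici (A k) from rfl,
      Measure.map_apply (hmeas k) measurableSet_Ici]
    rfl
  have hbound : ∀ k : ℕ, 2 ≤ k →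
      P (s k) ≤ ENNReal.ofReal ((k:ℝ) ^ (-(lam^2/2))) := by
    intro k hk
    have hk1 : 1 ≤ k := le_trans one_le_two hk
    have hk0 : (0:ℝ) < (k:ℝ) := by exact_mod_cast hk1
    rw [hPs k]
    by_cases hv : σ k ^ 2 = 0
    · rw [hv, gaussianReal_zero_var]
      rw [show {x : ℝ | A k ≤ x} = Ici (A k) from rfl,
        Measure.dirac_apply' _ measurableSet_Ici]
      have h0 : (0:ℝ) ∉ Ici (A k) := by
        simp only [mem_Ici, not_le]; exact hApos k hk1
      rw [Set.indicator_of_notMem h0]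
      exact zero_le
    · -- σ k ≠ 0
      have hσ0 : (0:ℝ) < (σ k : ℝ) := by
        have : σ k ≠ 0 := fun h => hv (by rw [h]; simp)
        exact_mod_cast this.bot_lt
      have hsqrt : Real.sqrt ((σ k ^ 2 : ℝ≥0) : ℝ) = (σ k : ℝ) := by
        push_cast
        rw [Real.sqrt_sq hσ0.le]
      have hLD : 0 < lam * Real.sqrt (Real.log k) * (1 - Real.exp (-ε * k^2)) := by
        have := hL k hk
        have := hD k hk1
        nlinarith
      have hσA : (σ k : ℝ) * (lam * Real.sqrt (Real.log k)) ≤ A k := by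
        have h1 := hσ k hk
        have h2 : (σ k : ℝ) * (lam * Real.sqrt (Real.log k) * (1 - Real.exp (-ε * k^2))) ≤ (k:ℝ) := by
          rw [← le_div_iff₀ hLD]; exact h1
        rw [hA]
        rw [le_div_iff₀ (hD k hk1)]
        calc (σ k : ℝ) * (lam * Real.sqrt (Real.log k)) * (1 - Real.exp (-ε * k^2))
            = (σ k : ℝ) * (lam * Real.sqrt (Real.log k) * (1 - Real.exp (-ε * k^2))) := by ring
          _ ≤ (k:ℝ) := h2
      have hav : Real.sqrt ((σ k ^ 2 : ℝ≥0) : ℝ) ≤ A k := by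
        rw [hsqrt]
        calc (σ k : ℝ) = (σ k : ℝ) * 1 := (mul_one _).symm
          _ ≤ (σ k : ℝ) * (lam * Real.sqrt (Real.log k)) := by
              apply mul_le_mul_of_nonneg_left (hL k hk) hσ0.le
          _ ≤ A k := hσA
      refine (gauss_tail hv (hApos k hk1) hav).trans ?_
      apply ENNReal.ofReal_le_ofReal
      rw [Real.rpow_def_of_pos hk0]
      rw [Real.exp_le_exp]
      -- -(A k)^2/(2 σ²) ≤ log k * -(lam²/2)
      have hvlt : ((σ k ^ 2 : ℝ≥0) : ℝ) = (σ k : ℝ)^2 := by push_cast; ring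
      rw [hvlt]
      rw [div_le_iff₀ (by positivity : (0:ℝ) < 2 * (σ k:ℝ)^2)]
      have hlogk0 : (0:ℝ) < Real.log k := by
        have h2 : (2:ℝ) ≤ (k:ℝ) := by exact_mod_cast hk
        have := Real.log_two_gt_d9
        have := Real.log_le_log (by norm_num : (0:ℝ) < 2) h2
        linarith
      have hsq : Real.sqrt (Real.log k) ^ 2 = Real.log k := Real.sq_sqrt hlogk0.le
      have hA2 : ((σ k : ℝ) * (lam * Real.sqrt (Real.log k)))^2 ≤ (A k)^2 := by
        apply pow_le_pow_left₀ (by positivity) hσA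
      have hexpand : ((σ k : ℝ) * (lam * Real.sqrt (Real.log k)))^2
          = (σ k:ℝ)^2 * lam^2 * Real.log k := by
        rw [mul_pow, mul_pow, hsq]; ring
      nlinarith [hA2]
  -- summability
  set g : ℕ → ℝ := fun k => if k < 2 then 1 else (k:ℝ) ^ (-(lam^2/2)) with hg
  have hgnonneg : ∀ k, 0 ≤ g k := by
    intro k; rw [hg]; dsimp only; split
    · norm_num
    · positivity
  have hgsum : Summable g := by
    have h1 : Summable (fun k : ℕ => (k:ℝ) ^ (-(lam^2/2))) :=
      Real.summable_nat_rpow.mpr (by linarith)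
    have h2 : Summable (fun k : ℕ => g (k + 2)) := by
      have := (summable_nat_add_iff 2).mpr h1
      apply this.congr
      intro k; rw [hg]; simp
    exact (summable_nat_add_iff 2).mp h2
  have htsum : (∑' k, P (s k)) ≠ ∞ := by
    have hle : ∀ k, P (s k) ≤ ENNReal.ofReal (g k) := by
      intro k
      rw [hg]; dsimp only; split
      · next h => calc P (s k) ≤ 1 := prob_le_one
                    _ = ENNReal.ofReal 1 := by norm_num
      · next h => exact hbound k (by omega)
    have : (∑' k, P (s k)) < ∞ :=
      calc (∑' k, P (s k)) ≤ ∑' k, ENNReal.ofReal (g k) := ENNReal.tsum_le_tsum hle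
        _ = ENNReal.ofReal (∑' k, g k) := (ENNReal.ofReal_tsum_of_nonneg hgnonneg hgsum).symm
        _ < ∞ := ENNReal.ofReal_lt_top
    exact this.ne
  -- Borel-Cantelli
  filter_upwards [MeasureTheory.ae_eventually_notMem htsum] with ω hω
  obtain ⟨N, hN⟩ := Filter.eventually_atTop.mp hω
  constructor
  · apply Set.Finite.subset (Set.finite_Iio N)
    intro k hk
    rcases hk with ⟨hk1, hk2⟩
    by_contra h
    exact hN k (not_lt.mp h) hk2
  · -- positivity of the infimum
    have hpos : ∀ k : ℕ, 1 ≤ k → 0 < blowupTime k (ξ k ω) := by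
      intro k hk
      unfold blowupTime
      split
      · exact ENNReal.zero_lt_top
      · next h =>
        push_neg at h
        have hk0 : (0:ℝ) < (k:ℝ) := by exact_mod_cast hk
        have hx0 : (0:ℝ) < ξ k ω := lt_trans hk0 h
        have hq1 : (k:ℝ) / ξ k ω < 1 := (div_lt_one hx0).mpr h
        have hq0 : 0 < (k:ℝ) / ξ k ω := div_pos hk0 hx0
        have hlogneg : Real.log (1 - (k:ℝ) / ξ k ω) < 0 :=
          Real.log_neg (by linarith) (by linarith)
        rw [ENNReal.ofReal_pos]
        have hinv : (0:ℝ) < 1/(k:ℝ)^2 := by positivity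
        nlinarith
    have hge : ∀ k : ℕ, N ≤ k → 1 ≤ k → ENNReal.ofReal ε ≤ blowupTime k (ξ k ω) := by
      intro k hkN hk1
      have hxA : ξ k ω < A k := not_le.mp (hN k hkN)
      unfold blowupTime
      split
      · exact le_top
      · next h =>
        push_neg at h
        have hk0 : (0:ℝ) < (k:ℝ) := by exact_mod_cast hk1
        have hx0 : (0:ℝ) < ξ k ω := lt_trans hk0 h
        apply ENNReal.ofReal_le_ofReal
        -- ξ < k / D ⇒ 1 - k/ξ < exp(-ε k²)
        have hDk := hD k hk1
        have h1 : ξ k ω * (1 - Real.exp (-ε * k^2)) < (k:ℝ) := by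
          have := (lt_div_iff₀ hDk).mp hxA
          linarith
        have h2 : 1 - (k:ℝ) / ξ k ω < Real.exp (-ε * k^2) := by
          rw [sub_lt_iff_lt_add, ← sub_lt_iff_lt_add']
          rw [lt_div_iff₀ hx0]
          nlinarith
        have h3 : 0 < 1 - (k:ℝ) / ξ k ω := by
          have : (k:ℝ) / ξ k ω < 1 := (div_lt_one hx0).mpr h
          linarith
        have h4 : Real.log (1 - (k:ℝ) / ξ k ω) < -ε * k^2 := by
          calc Real.log (1 - (k:ℝ) / ξ k ω) < Real.log (Real.exp (-ε * k^2)) :=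
                Real.log_lt_log h3 h2
            _ = -ε * k^2 := Real.log_exp _
        have hk2 : (0:ℝ) < (k:ℝ)^2 := by positivity
        rw [← sub_nonneg]
        have : -(1/(k:ℝ)^2) * Real.log (1 - (k:ℝ) / ξ k ω) - ε
            = (1/(k:ℝ)^2) * (-(Real.log (1 - (k:ℝ) / ξ k ω)) - ε * (k:ℝ)^2) := by
          field_simp
        rw [this]
        apply mul_nonneg (by positivity)
        nlinarith
    set m : ℝ≥0∞ := (Finset.range N).inf (fun k => if 1 ≤ k then blowupTime k (ξ k ω) else ⊤)
      with hm
    have hmpos : 0 < m := by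
      rw [hm, Finset.lt_inf_iff ENNReal.zero_lt_top]
      intro k _
      split
      · next hk => exact hpos k hk
      · exact ENNReal.zero_lt_top
    have hble : min (ENNReal.ofReal ε) m ≤ ⨅ (k : ℕ) (_ : 1 ≤ k), blowupTime k (ξ k ω) := by
      apply le_iInf; intro k; apply le_iInf; intro hk
      by_cases hkN : k < N
      · refine le_trans (min_le_right _ _) ?_
        rw [hm]
        refine le_trans (Finset.inf_le (Finset.mem_range.mpr hkN)) ?_
        rw [if_pos hk]
      · exact le_trans (min_le_left _ _) (hge k (not_lt.mp hkN) hk)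
    refine lt_of_lt_of_le ?_ hble
    exact lt_min (ENNReal.ofReal_pos.mpr hε) hmpos
end
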